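/- Let $a \ge -1/2$ and $\lambda > 0$. There exists a constant $C$ such that for all $A > B > 0$, $\int_{-1}^1 \frac{(1-s^2)^{a-1/2}}{(A - Bs)^{a+1/2+\lambda}}\,ds \le \frac{C}{A^{a+1/2}(A-B)^{\lambda}}$ (when $a = -1/2$ the integral is interpreted as the sum of the integrand values at $s = \pm 1$, i.e. $\frac{1}{(A-B)^{\lambda}} + \frac{1}{(A+B)^{\lambda}}$, up to the normalizing constant). -/

import Mathlib

open MeasureTheory Real Set

lemma rpow_le_K {x q : ℝ} (h1 : 1 ≤ x) (h2 : x ≤ 2) : x ^ q ≤ max 1 (2 ^ q) := by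
  rcases le_or_gt q 0 with hq | hq
  · exact le_max_of_le_left (Real.rpow_le_one_of_one_le_of_nonpos h1 hq)
  · exact le_max_of_le_right (Real.rpow_le_rpow (by linarith) h2 hq.le)

lemma int_one_add_rpow {q : ℝ} (hq : -1 < q) :
    IntegrableOn (fun s : ℝ => (1 + s) ^ q) (Ioo (-1 : ℝ) 0) := by
  have h0 : IntervalIntegrable (fun x : ℝ => x ^ q) volume 0 1 :=
    intervalIntegral.intervalIntegrable_rpow' hq
  have h1 : IntervalIntegrable (fun x : ℝ => (x + 1) ^ q) volume (-1) 0 := by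
    simpa using h0.comp_add_right 1
  have h2 : IntegrableOn (fun x : ℝ => (x + 1) ^ q) (Ioc (-1 : ℝ) 0) := by
    simpa [intervalIntegrable_iff, uIoc_of_le (by norm_num : (-1:ℝ) ≤ 0)] using h1
  exact (h2.mono_set Ioo_subset_Ioc_self).congr_fun (fun s _ => by rw [add_comm]) measurableSet_Ioo

lemma int_one_sub_sq {q : ℝ} (hq : -1 < q) :
    IntegrableOn (fun s : ℝ => (1 - s ^ 2) ^ q) (Ioo (-1 : ℝ) 0) := by
  refine Integrable.mono' (((int_one_add_rpow hq).const_mul (max 1 (2 ^ q)))) ?_ ?_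
  · exact (Measurable.aestronglyMeasurable (by fun_prop)).restrict
  · filter_upwards [ae_restrict_mem measurableSet_Ioo] with s hs
    obtain ⟨hs1, hs2⟩ := hs
    have e1 : (0:ℝ) < 1 - s := by linarith
    have e2 : (0:ℝ) < 1 + s := by linarith
    have : (1 - s ^ 2 : ℝ) = (1 - s) * (1 + s) := by ring
    rw [Real.norm_of_nonneg (Real.rpow_nonneg (by nlinarith) q), this,
      Real.mul_rpow e1.le e2.le]
    exact mul_le_mul_of_nonneg_right (rpow_le_K (by linarith) (by linarith))
      (Real.rpow_nonneg e2.le q)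

set_option maxHeartbeats 1000000 in
theorem stmt_3 (a lam : ℝ) (ha : -1/2 ≤ a) (hlam : 0 < lam) :
    ∃ C : ℝ, 0 < C ∧ ∀ A B : ℝ, 0 < B → B < A →
      (if a = -1/2 then 1 / (A - B) ^ lam + 1 / (A + B) ^ lam
       else ∫ s in Set.Ioo (-1 : ℝ) 1, (1 - s ^ 2) ^ (a - 1/2) / (A - B * s) ^ (a + 1/2 + lam))
        ≤ C / (A ^ (a + 1/2) * (A - B) ^ lam) := by
  by_cases hcase : a = -1/2
  · refine ⟨2, two_pos, fun A B hB hBA => ?_⟩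
    rw [if_pos hcase, hcase]
    have hAB : 0 < A - B := by linarith
    rw [show (-1/2 : ℝ) + 1/2 = 0 by norm_num, Real.rpow_zero, one_mul]
    have hABl : 0 < (A - B) ^ lam := Real.rpow_pos_of_pos hAB lam
    have h1 : 1 / (A + B) ^ lam ≤ 1 / (A - B) ^ lam := by
      gcongr
      linarith
    have h2 : (2:ℝ)/(A-B)^lam = 1/(A-B)^lam + 1/(A-B)^lam := by ring
    linarith
  · have ha' : -1/2 < a := lt_of_le_of_ne ha (Ne.symm hcase)
    set q := a - 1/2 with hq_def
    set p := a + 1/2 with hp_def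
    have hq : -1 < q := by rw [hq_def]; linarith
    have hp : 0 < p := by rw [hp_def]; linarith
    have hqp : q - (p + lam) = -1 - lam := by rw [hq_def, hp_def]; ring
    have hq1p : q + 1 = p := by rw [hq_def, hp_def]; ring
    set K := max 1 ((2:ℝ) ^ q) with hK_def
    have hK : 0 < K := lt_max_iff.mpr (Or.inl one_pos)
    set c₁ := ∫ s in Ioo (-1:ℝ) 0, (1 - s ^ 2) ^ q with hc1_def
    have hc1 : 0 ≤ c₁ :=
      setIntegral_nonneg measurableSet_Ioo
        (fun s hs => Real.rpow_nonneg (by nlinarith [hs.1, hs.2]) q)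
    refine ⟨c₁ + K / lam + K / p, by positivity, fun A B hB hBA => ?_⟩
    rw [if_neg hcase]
    have hA : 0 < A := hB.trans hBA
    have hAB : 0 < A - B := by linarith
    set u := B / A with hu_def
    have hu0 : 0 < u := div_pos hB hA
    have hu1 : u < 1 := (div_lt_one hA).mpr hBA
    have h1u : 1 - u = (A - B) / A := by rw [hu_def]; field_simp
    have h1u0 : 0 < 1 - u := by linarith
    set f := fun s : ℝ => (1 - s ^ 2) ^ q / (A - B * s) ^ (p + lam) with hf_def
    have hfm : Measurable f := by rw [hf_def]; fun_prop
    have hden : ∀ s : ℝ, s < 1 → 0 < A - B * s := by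
      intro s hs
      have := mul_le_of_le_one_right hB.le hs.le
      linarith
    have hfnn : ∀ s ∈ Ioo (-1:ℝ) 1, 0 ≤ f s := by
      intro s hs
      exact div_nonneg (Real.rpow_nonneg (by nlinarith [hs.1, hs.2]) q)
        (Real.rpow_nonneg (hden s hs.2).le _)
    -- dominating functions
    set g₁ := fun s : ℝ => (1 - s ^ 2) ^ q / A ^ (p + lam) with hg1_def
    set g₂ := fun s : ℝ => K * (1 - s) ^ (-1 - lam) / A ^ (p + lam) with hg2_def
    set g₃ := fun s : ℝ => K * (1 - s) ^ q / (A - B) ^ (p + lam) with hg3_def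
    -- pointwise bounds
    have hb₁ : ∀ s ∈ Ioo (-1:ℝ) 0, f s ≤ g₁ s := by
      intro s hs
      have h1 : A ≤ A - B * s := by
        have := mul_nonpos_of_nonneg_of_nonpos hB.le hs.2.le
        linarith
      have hnum : (0:ℝ) ≤ (1 - s ^ 2) ^ q :=
        Real.rpow_nonneg (by nlinarith [hs.1, hs.2]) q
      simp only [hf_def, hg1_def]
      exact div_le_div₀ hnum le_rfl (Real.rpow_pos_of_pos hA _)
        (Real.rpow_le_rpow hA.le h1 (by positivity))
    have hb₂ : ∀ s ∈ Ico (0:ℝ) u, f s ≤ g₂ s := by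
      intro s hs
      have hs0 : 0 ≤ s := hs.1
      have hs1 : s < 1 := lt_trans hs.2 hu1
      have e1 : (0:ℝ) < 1 - s := by linarith
      have e2 : (1:ℝ) ≤ 1 + s := by linarith
      have e2' : (1:ℝ) + s ≤ 2 := by linarith
      have hdl : A * (1 - s) ≤ A - B * s := by
        nlinarith [mul_nonneg (sub_nonneg.mpr hBA.le) hs0]
      have hdl0 : 0 < A * (1 - s) := by positivity
      have step1 : f s ≤ (1 - s) ^ q * K / (A * (1 - s)) ^ (p + lam) := by
        simp only [hf_def]
        rw [show (1 - s ^ 2 : ℝ) = (1 - s) * (1 + s) by ring,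
          Real.mul_rpow e1.le (by linarith)]
        exact div_le_div₀ (mul_nonneg (Real.rpow_nonneg e1.le q) hK.le)
          (mul_le_mul_of_nonneg_left (rpow_le_K e2 e2') (Real.rpow_nonneg e1.le q))
          (Real.rpow_pos_of_pos hdl0 _)
          (Real.rpow_le_rpow hdl0.le hdl (by positivity))
      have key : ∀ X Y Z Kv : ℝ, Y ≠ 0 → Z ≠ 0 → X * Kv / (Z * Y) = Kv * (X / Y) / Z := by
        intros X Y Z Kv hY hZ; field_simp
      have step2 : (1 - s) ^ q * K / (A * (1 - s)) ^ (p + lam) = g₂ s := by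
        simp only [hg2_def]
        rw [Real.mul_rpow hA.le e1.le, ← hqp, Real.rpow_sub e1 q (p + lam)]
        exact key ((1 - s) ^ q) ((1 - s) ^ (p + lam)) (A ^ (p + lam)) K
          (Real.rpow_pos_of_pos e1 _).ne' (Real.rpow_pos_of_pos hA _).ne'
      rw [← step2]; exact step1
    have hb₃ : ∀ s ∈ Ico u 1, f s ≤ g₃ s := by
      intro s hs
      have hs0 : 0 ≤ s := le_trans hu0.le hs.1
      have hs1 : s < 1 := hs.2
      have e1 : (0:ℝ) < 1 - s := by linarith
      have hdl : A - B ≤ A - B * s := by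
        have := mul_le_of_le_one_right hB.le hs1.le
        linarith
      simp only [hf_def, hg3_def]
      rw [show (1 - s ^ 2 : ℝ) = (1 - s) * (1 + s) by ring,
        Real.mul_rpow e1.le (by linarith), mul_comm ((1-s) ^ q)]
      exact div_le_div₀ (mul_nonneg hK.le (Real.rpow_nonneg e1.le q))
        (mul_le_mul_of_nonneg_right (rpow_le_K (by linarith) (by linarith))
          (Real.rpow_nonneg e1.le q))
        (Real.rpow_pos_of_pos hAB _)
        (Real.rpow_le_rpow hAB.le hdl (by positivity))
    -- integrability of dominating functions
    have hg1i : IntegrableOn g₁ (Ioo (-1:ℝ) 0) := (int_one_sub_sq hq).div_const _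
    have hg2i : IntegrableOn g₂ (Ico (0:ℝ) u) := by
      have hc : ContinuousOn g₂ (Icc (0:ℝ) u) := by
        apply ContinuousOn.div_const
        apply ContinuousOn.mul continuousOn_const
        apply ContinuousOn.rpow_const ((continuous_const.sub continuous_id).continuousOn)
        intro s hs
        exact Or.inl (ne_of_gt (by show (0:ℝ) < 1 - s; nlinarith [hs.2, hu1]))
      exact (hc.integrableOn_Icc).mono_set Ico_subset_Icc_self
    have hg3i : IntegrableOn g₃ (Ico u 1) := by
      have h0 : IntervalIntegrable (fun x : ℝ => x ^ q) volume 0 (1 - u) :=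
        intervalIntegral.intervalIntegrable_rpow' hq
      have h1 : IntervalIntegrable (fun x : ℝ => (1 - x) ^ q) volume u 1 := by
        have := (h0.comp_sub_left 1).symm
        simpa using this
      have h2 : IntegrableOn (fun x : ℝ => (1 - x) ^ q) (Ioc u 1) := by
        simpa [intervalIntegrable_iff, uIoc_of_le hu1.le] using h1
      have h3 : IntegrableOn (fun x : ℝ => (1 - x) ^ q) (Ico u 1) := by
        rw [integrableOn_Ico_iff_integrableOn_Ioo]
        exact h2.mono_set Ioo_subset_Ioc_self
      exact (h3.const_mul K).div_const _
    -- integrability of f on the pieces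
    have hf1 : IntegrableOn f (Ioo (-1:ℝ) 0) := by
      refine hg1i.mono' hfm.aestronglyMeasurable.restrict ?_
      filter_upwards [ae_restrict_mem measurableSet_Ioo] with s hs
      rw [Real.norm_of_nonneg (hfnn s ⟨hs.1, by linarith [hs.2]⟩)]
      exact hb₁ s hs
    have hf2 : IntegrableOn f (Ico (0:ℝ) u) := by
      refine hg2i.mono' hfm.aestronglyMeasurable.restrict ?_
      filter_upwards [ae_restrict_mem measurableSet_Ico] with s hs
      rw [Real.norm_of_nonneg (hfnn s ⟨by linarith [hs.1], lt_trans hs.2 hu1⟩)]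
      exact hb₂ s hs
    have hf3 : IntegrableOn f (Ico u 1) := by
      refine hg3i.mono' hfm.aestronglyMeasurable.restrict ?_
      filter_upwards [ae_restrict_mem measurableSet_Ico] with s hs
      rw [Real.norm_of_nonneg (hfnn s ⟨by linarith [hs.1, hu0.le], hs.2⟩)]
      exact hb₃ s hs
    -- split the integral
    have e23 : ∫ s in Ico (0:ℝ) 1, f s = (∫ s in Ico (0:ℝ) u, f s) + ∫ s in Ico u 1, f s := by
      rw [← Ico_union_Ico_eq_Ico hu0.le hu1.le,
        setIntegral_union (Ico_disjoint_Ico_same) measurableSet_Ico hf2 hf3]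
    have hf23 : IntegrableOn f (Ico (0:ℝ) 1) := by
      rw [← Ico_union_Ico_eq_Ico hu0.le hu1.le]; exact hf2.union hf3
    have hdisj : Disjoint (Ioo (-1:ℝ) 0) (Ico (0:ℝ) 1) :=
      Set.disjoint_left.mpr (fun s hs hs' => absurd hs'.1 (not_le.mpr hs.2))
    have hsplit : ∫ s in Ioo (-1:ℝ) 1, f s =
        (∫ s in Ioo (-1:ℝ) 0, f s) + ∫ s in Ico (0:ℝ) 1, f s := by
      rw [← Ioo_union_Ico_eq_Ioo (by norm_num : (-1:ℝ) < 0) (by norm_num : (0:ℝ) ≤ 1),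
        setIntegral_union hdisj measurableSet_Ico hf1 hf23]
    -- denominators
    have hXZ : 0 < A ^ p * (A - B) ^ lam := by positivity
    have hAle : A ^ p * (A - B) ^ lam ≤ A ^ (p + lam) := by
      rw [Real.rpow_add hA p lam]
      exact mul_le_mul_of_nonneg_left
        (Real.rpow_le_rpow hAB.le (by linarith) hlam.le) (Real.rpow_nonneg hA.le p)
    have nAp : (A:ℝ) ^ p ≠ 0 := (Real.rpow_pos_of_pos hA p).ne'
    have nAl : (A:ℝ) ^ lam ≠ 0 := (Real.rpow_pos_of_pos hA lam).ne'
    have nABl : ((A - B):ℝ) ^ lam ≠ 0 := (Real.rpow_pos_of_pos hAB lam).ne'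
    have nABp : ((A - B):ℝ) ^ p ≠ 0 := (Real.rpow_pos_of_pos hAB p).ne'
    -- piece 1
    have S1 : ∫ s in Ioo (-1:ℝ) 0, f s ≤ c₁ / (A ^ p * (A - B) ^ lam) := by
      have h1 : ∫ s in Ioo (-1:ℝ) 0, f s ≤ ∫ s in Ioo (-1:ℝ) 0, g₁ s :=
        setIntegral_mono_on hf1 hg1i measurableSet_Ioo hb₁
      have h2 : ∫ s in Ioo (-1:ℝ) 0, g₁ s = c₁ / A ^ (p + lam) := by
        simp only [hg1_def]
        rw [integral_div]
      have h3 : c₁ / A ^ (p + lam) ≤ c₁ / (A ^ p * (A - B) ^ lam) := by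
        gcongr
      linarith
    -- piece 2
    have hJ2 : ∫ s in Ico (0:ℝ) u, (1 - s) ^ (-1 - lam) ≤ (1 - u) ^ (-lam) / lam := by
      have h1 : ∫ s in Ico (0:ℝ) u, (1 - s) ^ (-1 - lam)
          = ∫ s in (0:ℝ)..u, (1 - s) ^ (-1 - lam) := by
        rw [intervalIntegral.integral_of_le hu0.le, integral_Ico_eq_integral_Ioo,
          integral_Ioc_eq_integral_Ioo]
      have h2 : (∫ s in (0:ℝ)..u, (1 - s) ^ (-1 - lam))
          = ∫ x in (1 - u)..(1 - 0 : ℝ), x ^ (-1 - lam) :=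
        intervalIntegral.integral_comp_sub_left (fun x : ℝ => x ^ (-1 - lam)) 1
      have h3 : (∫ x in (1 - u)..(1 - 0 : ℝ), x ^ (-1 - lam))
          = ((1 - 0 : ℝ) ^ ((-1 - lam) + 1) - (1 - u) ^ ((-1 - lam) + 1)) / ((-1 - lam) + 1) :=
        integral_rpow (Or.inr ⟨by intro h; rw [show lam = -(-1-lam) - 1 by ring, h] at hlam; norm_num at hlam,
          Set.notMem_uIcc_of_lt h1u0 (by norm_num)⟩)
      rw [h1, h2, h3, show (-1 - lam) + 1 = -lam by ring, show (1 : ℝ) - 0 = 1 by norm_num,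
        Real.one_rpow]
      have hX : 0 ≤ (1 - u) ^ (-lam) := Real.rpow_nonneg h1u0.le _
      have he : (1 - (1 - u) ^ (-lam)) / (-lam) = ((1 - u) ^ (-lam) - 1) / lam := by
        rw [div_neg]
        field_simp
        ring
      rw [he]
      gcongr
      linarith
    have S2 : ∫ s in Ico (0:ℝ) u, f s ≤ (K / lam) / (A ^ p * (A - B) ^ lam) := by
      have h1 : ∫ s in Ico (0:ℝ) u, f s ≤ ∫ s in Ico (0:ℝ) u, g₂ s :=
        setIntegral_mono_on hf2 hg2i measurableSet_Ico hb₂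
      have h2 : ∫ s in Ico (0:ℝ) u, g₂ s
          = K * (∫ s in Ico (0:ℝ) u, (1 - s) ^ (-1 - lam)) / A ^ (p + lam) := by
        simp only [hg2_def]
        rw [integral_div, integral_const_mul]
      have h3 : K * (∫ s in Ico (0:ℝ) u, (1 - s) ^ (-1 - lam)) / A ^ (p + lam)
          ≤ K * ((1 - u) ^ (-lam) / lam) / A ^ (p + lam) := by
        gcongr
      have h4 : K * ((1 - u) ^ (-lam) / lam) / A ^ (p + lam)
          = (K / lam) / (A ^ p * (A - B) ^ lam) := by
        rw [h1u, Real.rpow_neg (div_nonneg hAB.le hA.le), Real.div_rpow hAB.le hA.le,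
          Real.rpow_add hA p lam]
        field_simp
      linarith
    -- piece 3
    have hJ3 : ∫ s in Ico u 1, (1 - s) ^ q = (1 - u) ^ p / p := by
      have h1 : ∫ s in Ico u 1, (1 - s) ^ q = ∫ s in u..(1:ℝ), (1 - s) ^ q := by
        rw [intervalIntegral.integral_of_le hu1.le, integral_Ico_eq_integral_Ioo,
          integral_Ioc_eq_integral_Ioo]
      have h2 : (∫ s in u..(1:ℝ), (1 - s) ^ q) = ∫ x in (1 - (1:ℝ))..(1 - u), x ^ q :=
        intervalIntegral.integral_comp_sub_left (fun x : ℝ => x ^ q) 1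
      have h3 : (∫ x in (1 - (1:ℝ))..(1 - u), x ^ q)
          = ((1 - u) ^ (q + 1) - (1 - (1:ℝ)) ^ (q + 1)) / (q + 1) :=
        integral_rpow (Or.inl hq)
      rw [h1, h2, h3, hq1p, show (1 : ℝ) - 1 = 0 by norm_num, Real.zero_rpow hp.ne']
      ring
    have S3 : ∫ s in Ico u 1, f s ≤ (K / p) / (A ^ p * (A - B) ^ lam) := by
      have h1 : ∫ s in Ico u 1, f s ≤ ∫ s in Ico u 1, g₃ s :=
        setIntegral_mono_on hf3 hg3i measurableSet_Ico hb₃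
      have h2 : ∫ s in Ico u 1, g₃ s = K * ((1 - u) ^ p / p) / (A - B) ^ (p + lam) := by
        simp only [hg3_def]
        rw [integral_div, integral_const_mul, hJ3]
      have h4 : K * ((1 - u) ^ p / p) / (A - B) ^ (p + lam)
          = (K / p) / (A ^ p * (A - B) ^ lam) := by
        rw [h1u, Real.div_rpow hAB.le hA.le, Real.rpow_add hAB p lam]
        field_simp
      linarith
    -- combine
    calc ∫ s in Ioo (-1:ℝ) 1, f s
        ≤ c₁ / (A ^ p * (A - B) ^ lam) + ((K / lam) / (A ^ p * (A - B) ^ lam)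
            + (K / p) / (A ^ p * (A - B) ^ lam)) := by
          rw [hsplit, e23]
          exact add_le_add S1 (add_le_add S2 S3)
      _ = (c₁ + K / lam + K / p) / (A ^ p * (A - B) ^ lam) := by ring
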